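/- (Integration-by-parts step in the crossing derivative computation) For every real number k > 0, one has ∫₁^∞ k·(r² − 1)·r^{2k+1}·e^{−k·r²} dr = ∫₁^∞ ( k + 1 − k/r² )·r^{2k+1}·e^{−k·r²} dr, and this common value is strictly greater than ∫₁^∞ r^{2k+1}·e^{−k·r²} dr. -/

import Mathlib

open MeasureTheory Real Set Filter

lemma crossing_aux_int {k : ℝ} (hk : 0 < k) {s : ℝ} (hs : -1 < s) :
    IntegrableOn (fun r : ℝ => r ^ s * Real.exp (-k * r ^ 2)) (Set.Ioi 1) :=
  (integrableOn_rpow_mul_exp_neg_mul_sq hk hs).mono_set (Set.Ioi_subset_Ioi zero_le_one)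

lemma crossing_aux_tendsto {k : ℝ} (hk : 0 < k) (s : ℝ) :
    Tendsto (fun r : ℝ => r ^ s * Real.exp (-k * r ^ 2)) atTop (nhds 0) := by
  have h1 := tendsto_rpow_mul_exp_neg_mul_atTop_nhds_zero (s / 2) k hk
  have h2 : Tendsto (fun r : ℝ => r ^ 2) atTop atTop :=
    tendsto_pow_atTop two_ne_zero
  refine (h1.comp h2).congr' ?_
  filter_upwards [eventually_gt_atTop (0:ℝ)] with r hr
  simp only [Function.comp_apply]
  rw [← Real.rpow_natCast r 2, ← Real.rpow_mul hr.le]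
  norm_num
  congr 1
  ring

theorem crossing_integration_by_parts (k : ℝ) (hk : 0 < k) :
    (∫ r in Set.Ioi (1:ℝ), k * (r ^ 2 - 1) * r ^ (2 * k + 1) * Real.exp (-k * r ^ 2))
      = (∫ r in Set.Ioi (1:ℝ),
          (k + 1 - k / r ^ 2) * r ^ (2 * k + 1) * Real.exp (-k * r ^ 2)) ∧
    (∫ r in Set.Ioi (1:ℝ), r ^ (2 * k + 1) * Real.exp (-k * r ^ 2))
      < ∫ r in Set.Ioi (1:ℝ), k * (r ^ 2 - 1) * r ^ (2 * k + 1) * Real.exp (-k * r ^ 2) := by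
  have h2k1 : (-1:ℝ) < 2*k+1 := by linarith
  have h2k3 : (-1:ℝ) < 2*k+3 := by linarith
  have h2km1 : (-1:ℝ) < 2*k-1 := by linarith
  set e : ℝ → ℝ := fun r => Real.exp (-k * r ^ 2) with he
  set f : ℝ → ℝ := fun r => k * (r ^ 2 - 1) * r ^ (2 * k + 1) * e r with hfdef
  set g : ℝ → ℝ := fun r => (k + 1 - k / r ^ 2) * r ^ (2 * k + 1) * e r with hgdef
  set h : ℝ → ℝ := fun r => r ^ (2 * k + 1) * e r with hhdef
  -- pointwise algebra on (0, ∞)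
  have hpow1 : ∀ r : ℝ, 0 < r → r ^ (2*k+3) = r ^ (2*k+1) * r ^ 2 := by
    intro r hr
    rw [← Real.rpow_natCast r 2, ← Real.rpow_add hr]
    ring_nf
  have hpow2 : ∀ r : ℝ, 0 < r → r ^ (2*k+1) = r ^ (2*k-1) * r ^ 2 := by
    intro r hr
    rw [← Real.rpow_natCast r 2, ← Real.rpow_add hr]
    ring_nf
  have hpow3 : ∀ r : ℝ, 0 < r → r ^ (2*k+1) = r ^ (2*k) * r := by
    intro r hr
    exact Real.rpow_add_one (ne_of_gt hr) _
  have hpow4 : ∀ r : ℝ, 0 < r → r ^ (2*k-1) = r ^ (2*k) / r := by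
    intro r hr
    exact Real.rpow_sub_one (ne_of_gt hr) _
  have hpow5 : ∀ r : ℝ, 0 < r → r ^ (2*k+2) = r ^ (2*k) * r ^ 2 := by
    intro r hr
    rw [← Real.rpow_natCast r 2, ← Real.rpow_add hr]
    ring_nf
  have hf : ∀ r ∈ Set.Ioi (1:ℝ),
      k * (r ^ (2*k+3) * e r) - k * (r ^ (2*k+1) * e r) = f r := by
    intro r hr
    have hr0 : 0 < r := lt_trans one_pos hr
    rw [hpow1 r hr0]; simp only [hfdef]; ring
  have hg : ∀ r ∈ Set.Ioi (1:ℝ),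
      (k+1) * (r ^ (2*k+1) * e r) - k * (r ^ (2*k-1) * e r) = g r := by
    intro r hr
    have hr0 : 0 < r := lt_trans one_pos hr
    have hr0' : (r:ℝ) ^ 2 ≠ 0 := by positivity
    simp only [hgdef]
    rw [hpow2 r hr0]
    field_simp
  -- integrability
  have If : IntegrableOn f (Set.Ioi 1) := by
    refine IntegrableOn.congr_fun ?_ hf measurableSet_Ioi
    exact ((crossing_aux_int hk h2k3).const_mul k).sub ((crossing_aux_int hk h2k1).const_mul k)
  have Ig : IntegrableOn g (Set.Ioi 1) := by
    refine IntegrableOn.congr_fun ?_ hg measurableSet_Ioi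
    exact ((crossing_aux_int hk h2k1).const_mul (k+1)).sub
      ((crossing_aux_int hk h2km1).const_mul k)
  have Ih : IntegrableOn h (Set.Ioi 1) := crossing_aux_int hk h2k1
  -- the antiderivative
  set F : ℝ → ℝ := fun r => -(1/2) * ((r ^ 2 - 1) * r ^ (2*k) * e r) with hFdef
  have hF : ∀ r ∈ Set.Ici (1:ℝ), HasDerivAt F (f r - g r) r := by
    intro r hr
    have hr0 : 0 < r := lt_of_lt_of_le one_pos hr
    have dpoly : HasDerivAt (fun r : ℝ => (r ^ 2 - 1) * r ^ (2*k))
        ((2 * r ^ 1) * r ^ (2*k) + (r ^ 2 - 1) * (2*k * r ^ (2*k-1))) r := by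
      have d1 : HasDerivAt (fun r : ℝ => r ^ 2 - 1) (2 * r ^ 1) r := by
        simpa using (hasDerivAt_pow 2 r).sub_const 1
      exact d1.mul (Real.hasDerivAt_rpow_const (Or.inl (ne_of_gt hr0)))
    have dexp : HasDerivAt e (e r * (-k * (2 * r ^ 1))) r := by
      have d2 : HasDerivAt (fun r : ℝ => -k * r ^ 2) (-k * (2 * r ^ 1)) r :=
        (hasDerivAt_pow 2 r).const_mul (-k)
      exact d2.exp
    have := (dpoly.mul dexp).const_mul (-(1/2) : ℝ)
    convert this using 1
    · rfl
    · rfl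
    · rfl
    simp only [hfdef, hgdef]
    rw [hpow3 r hr0, hpow4 r hr0]
    have hrne : r ≠ 0 := ne_of_gt hr0
    field_simp
    ring
  have hFtop : Tendsto F atTop (nhds 0) := by
    have t1 := ((crossing_aux_tendsto hk (2*k+2)).sub (crossing_aux_tendsto hk (2*k))).const_mul
      (-(1/2) : ℝ)
    rw [sub_zero, mul_zero] at t1
    refine t1.congr' ?_
    filter_upwards [eventually_gt_atTop (0:ℝ)] with r hr
    simp only [hFdef, he]
    rw [hpow5 r hr]
    ring
  have hint : ∫ r in Set.Ioi (1:ℝ), (f r - g r) = 0 - F 1 :=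
    integral_Ioi_of_hasDerivAt_of_tendsto' hF (If.sub Ig) hFtop
  have hF1 : F 1 = 0 := by simp [hFdef]
  have heq : (∫ r in Set.Ioi (1:ℝ), f r) = ∫ r in Set.Ioi (1:ℝ), g r := by
    have := integral_sub If Ig
    rw [hint, hF1, sub_zero] at this
    linarith [this]
  refine ⟨heq, ?_⟩
  rw [heq]
  -- strict inequality: ∫ h < ∫ g
  have hgh : ∀ r ∈ Set.Ioi (1:ℝ), 0 < g r - h r := by
    intro r hr
    have hr1 : (1:ℝ) < r := hr
    have hr0 : 0 < r := lt_trans one_pos hr1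
    have hr2 : (1:ℝ) < r ^ 2 := by nlinarith
    have hkk : 0 < k - k / r ^ 2 := by
      have : k / r ^ 2 < k := by
        rw [div_lt_iff₀ (by positivity)]
        nlinarith
      linarith
    have hX : 0 < r ^ (2*k+1) := Real.rpow_pos_of_pos hr0 _
    have hE : 0 < e r := Real.exp_pos _
    have hrw : g r - h r = (k - k / r ^ 2) * (r ^ (2*k+1) * e r) := by
      simp only [hgdef, hhdef]; ring
    rw [hrw]
    exact mul_pos hkk (mul_pos hX hE)
  have hpos : 0 < ∫ r in Set.Ioi (1:ℝ), (g r - h r) := by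
    rw [MeasureTheory.integral_pos_iff_support_of_nonneg_ae]
    · refine lt_of_lt_of_le ?_ (measure_mono (fun r hr => ne_of_gt (hgh r hr)))
      rw [Measure.restrict_apply_self]
      simp [Real.volume_Ioi]
    · filter_upwards [ae_restrict_mem measurableSet_Ioi] with r hr
      exact (hgh r hr).le
    · exact Ig.sub Ih
  have := integral_sub Ig Ih
  linarith [hpos, this ▸ hpos]
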